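/- Let G be a locally compact group with left Haar measure λ_G, K a compact subgroup with normalized Haar measure, and μ the G-invariant measure on G/K satisfying the Weyl integration formula. Let U be a K-bi-invariant symmetric neighbourhood of the identity in G and V a K-bi-invariant symmetric subset of G. Then the Delsarte constants coincide: C_{G/K}(U, V) := sup over Φ ∈ F_{G/K}(U, V) of ∫_{G/K} Φ(K, yK) dμ(yK) equals C_G^K(U, V) := sup over φ ∈ F_G^K(U, V) of ∫_G φ(g) dλ_G(g). -/

import Mathlib

open scoped BigOperators ComplexOrder Pointwise
open MeasureTheory

/-- A real-valued function on a group is positive definite. -/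
def IsPosDefFnR {G : Type*} [Group G] (φ : G → ℝ) : Prop :=
  ∀ (n : ℕ) (c : Fin n → ℂ) (g : Fin n → G),
    0 ≤ ∑ i, ∑ j, c i * (starRingEnd ℂ) (c j) * (φ ((g i)⁻¹ * g j) : ℂ)

/-- `K`-bi-invariance of a real-valued function on `G`. -/
def IsBiInvariantR {G : Type*} [Group G] (K : Subgroup G) (φ : G → ℝ) : Prop :=
  ∀ (k k' : K) (g : G), φ ((k : G) * g * (k' : G)) = φ g

/-- A real-valued kernel on `G/K × G/K` is positive definite. -/
def IsPosDefKernelR {G : Type*} [Group G] (K : Subgroup G)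
    (Φ : G ⧸ K → G ⧸ K → ℝ) : Prop :=
  ∀ (n : ℕ) (a : Fin n → ℂ) (x : Fin n → G),
    0 ≤ ∑ i, ∑ j, a i * (starRingEnd ℂ) (a j) *
      (Φ (QuotientGroup.mk (x i)) (QuotientGroup.mk (x j)) : ℂ)

/-- `G`-invariance of a real-valued kernel on `G/K × G/K`. -/
def IsGInvariantKernel {G : Type*} [Group G] (K : Subgroup G)
    (Φ : G ⧸ K → G ⧸ K → ℝ) : Prop :=
  ∀ g x y : G, Φ (QuotientGroup.mk (g * x)) (QuotientGroup.mk (g * y)) =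
    Φ (QuotientGroup.mk x) (QuotientGroup.mk y)

/-- The admissible class `F_G^K(U, V)` of the Delsarte problem for
`K`-bi-invariant functions on `G`. -/
def FdelFun (G : Type*) [Group G] [TopologicalSpace G] (K : Subgroup G)
    (U V : Set G) : Set (G → ℝ) :=
  {φ | Continuous φ ∧ IsPosDefFnR φ ∧ IsBiInvariantR K φ ∧ φ 1 = 1 ∧
    tsupport (fun g => max (φ g) 0) ⊆ U ∧ tsupport (fun g => max (-(φ g)) 0) ⊆ V}

/-- The admissible class `F_{G/K}(U, V)` of the Delsarte problem for
`G`-invariant kernels on `G/K`. -/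
def FdelKer (G : Type*) [Group G] [TopologicalSpace G] (K : Subgroup G)
    (U V : Set G) : Set (G ⧸ K → G ⧸ K → ℝ) :=
  {Φ | Continuous (fun p : (G ⧸ K) × (G ⧸ K) => Φ p.1 p.2) ∧
    IsPosDefKernelR K Φ ∧ IsGInvariantKernel K Φ ∧
    (∀ x : G, Φ (QuotientGroup.mk x) (QuotientGroup.mk x) = 1) ∧
    tsupport (fun x : G => max (Φ (QuotientGroup.mk (1 : G)) (QuotientGroup.mk x)) 0) ⊆ U ∧
    tsupport (fun x : G => max (-(Φ (QuotientGroup.mk (1 : G)) (QuotientGroup.mk x))) 0) ⊆ V}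


section DelsarteAux

set_option linter.unusedSectionVars false

open scoped Pointwise ENNReal
open Set Function

/-- A set covered by countably many compact sets. -/
def CovCpt {X : Type*} [TopologicalSpace X] (s : Set X) : Prop :=
  ∃ u : ℕ → Set X, (∀ n, IsCompact (u n)) ∧ s ⊆ ⋃ n, u n

lemma CovCpt.mono {X : Type*} [TopologicalSpace X] {s t : Set X} (h : CovCpt t) (hst : s ⊆ t) :
    CovCpt s := by
  rcases h with ⟨u, hu, hsub⟩
  exact ⟨u, hu, hst.trans hsub⟩

lemma CovCpt.iUnion_nat {X : Type*} [TopologicalSpace X] {s : ℕ → Set X}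
    (h : ∀ n, CovCpt (s n)) : CovCpt (⋃ n, s n) := by
  choose u hu hsub using h
  refine ⟨fun m => u (Nat.unpair m).1 (Nat.unpair m).2, fun m => hu _ _, ?_⟩
  intro x hx
  rcases mem_iUnion.mp hx with ⟨n, hn⟩
  rcases mem_iUnion.mp (hsub n hn) with ⟨k, hk⟩
  exact mem_iUnion.mpr ⟨Nat.pair n k, by simpa [Nat.unpair_pair] using hk⟩

lemma CovCpt.image {X Y : Type*} [TopologicalSpace X] [TopologicalSpace Y] {s : Set X}
    (h : CovCpt s) {f : X → Y} (hf : Continuous f) : CovCpt (f '' s) := by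
  rcases h with ⟨u, hu, hsub⟩
  refine ⟨fun n => f '' u n, fun n => (hu n).image hf, ?_⟩
  rintro y ⟨x, hx, rfl⟩
  rcases mem_iUnion.mp (hsub hx) with ⟨n, hn⟩
  exact mem_iUnion.mpr ⟨n, mem_image_of_mem f hn⟩

/-- If an open set is not coverable by countably many compacts, but every fiber of `F` is,
and the measure is positive on nonempty open sets, then the measure of the set is infinite. -/
lemma measure_eq_top_of_not_covCpt {X Y : Type*} [TopologicalSpace X] [MeasurableSpace X]
    [OpensMeasurableSpace X] (m : Measure X)
    (pos : ∀ W : Set X, IsOpen W → W.Nonempty → m W ≠ 0)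
    (F : X → Y) (hopen : ∀ y : Y, IsOpen (F ⁻¹' {y}))
    (hcov : ∀ y : Y, CovCpt (F ⁻¹' {y}))
    {O : Set X} (hO : IsOpen O) (hnc : ¬ CovCpt O) : m O = ∞ := by
  have hOne : O.Nonempty := by
    rcases eq_empty_or_nonempty O with h | h
    · exact absurd ⟨fun _ => ∅, fun _ => isCompact_empty, by simp [h]⟩ hnc
    · exact h
  set Q := F '' O with hQdef
  have hQne : Q.Nonempty := hOne.image F
  have hQunc : ¬ Q.Countable := by
    intro hc
    rcases hc.exists_eq_range hQne with ⟨q, hq⟩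
    apply hnc
    refine (CovCpt.iUnion_nat (s := fun n => O ∩ F ⁻¹' {q n}) ?_).mono ?_
    · intro n; exact (hcov (q n)).mono inter_subset_right
    · intro x hx
      have hmem : F x ∈ Q := mem_image_of_mem F hx
      rw [hq] at hmem
      rcases hmem with ⟨n, hn⟩
      exact mem_iUnion.mpr ⟨n, hx, by simp [hn]⟩
  have hpigeon : ∃ k : ℕ, ¬ (Q ∩ {q | (k : ℝ≥0∞)⁻¹ < m (O ∩ F ⁻¹' {q})}).Countable := by
    by_contra hall
    push_neg at hall
    apply hQunc
    have hcover : Q = ⋃ k : ℕ, Q ∩ {q | (k : ℝ≥0∞)⁻¹ < m (O ∩ F ⁻¹' {q})} := by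
      apply Subset.antisymm
      · intro q hq
        have hne : (O ∩ F ⁻¹' {q}).Nonempty := by
          rcases hq with ⟨x, hx, rfl⟩; exact ⟨x, hx, rfl⟩
        rcases ENNReal.exists_inv_nat_lt (pos _ (hO.inter (hopen q)) hne) with ⟨k, hk⟩
        exact mem_iUnion.mpr ⟨k, hq, hk⟩
      · exact iUnion_subset fun k => inter_subset_left
    rw [hcover]
    exact countable_iUnion hall
  rcases hpigeon with ⟨k, hk⟩
  have hinf : (Q ∩ {q | (k : ℝ≥0∞)⁻¹ < m (O ∩ F ⁻¹' {q})}).Infinite := by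
    intro hfin; exact hk hfin.countable
  have hkne : (k : ℝ≥0∞)⁻¹ ≠ 0 := by
    simp [ENNReal.inv_ne_zero]
  let e := hinf.natEmbedding
  have hdisj : Pairwise (Disjoint on fun i : ℕ => O ∩ F ⁻¹' {((e i : _) : Y)}) := by
    intro i j hij
    have hne : ((e i : _) : Y) ≠ ((e j : _) : Y) := by
      intro h
      exact hij (e.injective (Subtype.ext h))
    refine Set.disjoint_left.mpr ?_
    rintro x ⟨-, hxi⟩ ⟨-, hxj⟩
    exact hne (by rw [← hxi, ← hxj])
  have hms : ∀ i : ℕ, MeasurableSet (O ∩ F ⁻¹' {((e i : _) : Y)}) :=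
    fun i => (hO.inter (hopen _)).measurableSet
  have hle : (⋃ i : ℕ, O ∩ F ⁻¹' {((e i : _) : Y)}) ⊆ O := iUnion_subset fun i => inter_subset_left
  have htop : m (⋃ i : ℕ, O ∩ F ⁻¹' {((e i : _) : Y)}) = ∞ := by
    rw [measure_iUnion hdisj hms]
    have hlb : ∀ i : ℕ, (k : ℝ≥0∞)⁻¹ ≤ m (O ∩ F ⁻¹' {((e i : _) : Y)}) :=
      fun i => le_of_lt (e i).2.2
    refine top_le_iff.mp ?_
    calc (∞ : ℝ≥0∞) = ∑' _ : ℕ, (k : ℝ≥0∞)⁻¹ :=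
          (ENNReal.tsum_const_eq_top_of_ne_zero hkne).symm
      _ ≤ _ := ENNReal.tsum_le_tsum hlb
  exact top_le_iff.mp (htop ▸ measure_mono hle)

section GroupAux
variable {G : Type*} [Group G] [TopologicalSpace G] [IsTopologicalGroup G]
    [LocallyCompactSpace G] [T2Space G] (K : Subgroup G) [CompactSpace K]

lemma K_cpt : IsCompact (K : Set G) := by
  rw [show (K : Set G) = Set.range ((↑) : K → G) from Subtype.range_coe.symm]
  exact isCompact_range continuous_subtype_val

lemma quot_t2 : T2Space (G ⧸ K) := by
  rw [t2_iff_isClosed_diagonal, ← isOpen_compl_iff]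
  have hR : IsClosed {p : G × G | p.1⁻¹ * p.2 ∈ K} :=
    IsClosed.preimage (continuous_fst.inv.mul continuous_snd) (K_cpt K).isClosed
  have himg : (Set.diagonal (G ⧸ K))ᶜ =
      (Prod.map (QuotientGroup.mk : G → G ⧸ K) QuotientGroup.mk) ''
        {p : G × G | p.1⁻¹ * p.2 ∈ K}ᶜ := by
    ext ⟨p₁, p₂⟩
    constructor
    · intro hp
      obtain ⟨a, rfl⟩ := QuotientGroup.mk_surjective p₁
      obtain ⟨b, rfl⟩ := QuotientGroup.mk_surjective p₂
      refine ⟨(a, b), fun hab => hp ?_, rfl⟩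
      exact QuotientGroup.eq.mpr hab
    · rintro ⟨⟨a, b⟩, hab, heq⟩
      rw [Prod.ext_iff] at heq
      obtain ⟨h1, h2⟩ := heq
      simp only [Prod.map_fst, Prod.map_snd] at h1 h2
      subst h1; subst h2
      intro h
      exact hab (QuotientGroup.eq.mp h)
  rw [himg]
  exact (QuotientGroup.isOpenMap_coe.prodMap QuotientGroup.isOpenMap_coe) _ hR.isOpen_compl

lemma exists_compact_preimage_subset {C' : Set (G ⧸ K)} (hC' : IsCompact C') :
    ∃ D : Set G, IsCompact D ∧ (QuotientGroup.mk : G → G ⧸ K) ⁻¹' C' ⊆ D := by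
  have h : ∀ y ∈ C', ∃ V : Set G, IsCompact V ∧
      y ∈ QuotientGroup.mk '' interior V := by
    intro y _
    obtain ⟨g, rfl⟩ := QuotientGroup.mk_surjective y
    obtain ⟨V, hVc, hVn⟩ := exists_compact_mem_nhds g
    exact ⟨V, hVc, mem_image_of_mem _ (mem_interior_iff_mem_nhds.mpr hVn)⟩
  choose! V hVc hVm using h
  obtain ⟨t, htsub, htfin, hcov⟩ :=
    hC'.elim_finite_subcover_image (ι := G ⧸ K) (b := C')
      (c := fun y => QuotientGroup.mk '' interior (V y))
      (fun y _ => QuotientGroup.isOpenMap_coe _ isOpen_interior)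
      (fun y hy => mem_biUnion hy (hVm y hy))
  refine ⟨(⋃ y ∈ t, V y) * (K : Set G),
    (htfin.isCompact_biUnion fun y hy => hVc y (htsub hy)).mul (K_cpt K), ?_⟩
  intro x hx
  rcases mem_iUnion₂.mp (hcov hx) with ⟨y, hyt, hxy⟩
  rcases hxy with ⟨v, hv, hveq⟩
  have hvK : v⁻¹ * x ∈ K := QuotientGroup.eq.mp hveq
  have : x = v * (v⁻¹ * x) := by group
  rw [this]
  exact Set.mul_mem_mul (mem_biUnion hyt (interior_subset hv)) hvK

lemma exists_open_covcpt_subgroup :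
    ∃ H : Subgroup G, K ≤ H ∧ IsOpen (H : Set G) ∧ CovCpt (H : Set G) := by
  obtain ⟨C, hCc, hCn⟩ := exists_compact_mem_nhds (1 : G)
  set T : Set G := (C ∪ (K : Set G)) ∪ (C ∪ (K : Set G))⁻¹ with hT
  have hTc : IsCompact T := (hCc.union (K_cpt K)).union (hCc.union (K_cpt K)).inv
  have hTsymm : T⁻¹ = T := by
    rw [hT, Set.union_inv, inv_inv]
    exact Set.union_comm _ _
  have hCT : C ⊆ T := (Set.subset_union_left ..).trans (Set.subset_union_left ..)
  have hKT : (K : Set G) ⊆ T := (Set.subset_union_right ..).trans (Set.subset_union_left ..)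
  refine ⟨Subgroup.closure T, fun k hk => Subgroup.subset_closure (hKT hk), ?_, ?_⟩
  · exact Subgroup.isOpen_of_mem_nhds _
      (Filter.mem_of_superset hCn (hCT.trans Subgroup.subset_closure))
  · refine ⟨fun n => T ^ (n + 1), fun n => ?_, ?_⟩
    · induction n with
      | zero => simpa using hTc
      | succ m ih =>
        have : T ^ (m + 1 + 1) = T ^ (m + 1) * T := pow_succ T (m + 1)
        simp only [this]
        exact IsCompact.mul (by simpa using ih) hTc
    · intro x hx
      refine Subgroup.closure_induction (k := T)
        (p := fun g _ => g ∈ ⋃ n, T ^ (n + 1)) ?_ ?_ ?_ ?_ hx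
      · intro z hz
        exact mem_iUnion.mpr ⟨0, by simpa using hz⟩
      · have h1C : (1 : G) ∈ C := mem_of_mem_nhds hCn
        exact mem_iUnion.mpr ⟨0, by simpa using hCT h1C⟩
      · rintro a b _ _ ha hb
        rcases mem_iUnion.mp ha with ⟨n, hn⟩
        rcases mem_iUnion.mp hb with ⟨m, hm⟩
        refine mem_iUnion.mpr ⟨n + m + 1, ?_⟩
        have : a * b ∈ T ^ (n + 1) * T ^ (m + 1) := Set.mul_mem_mul hn hm
        rwa [← pow_add, show n + 1 + (m + 1) = n + m + 1 + 1 by ring] at this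
      · rintro a _ ha
        rcases mem_iUnion.mp ha with ⟨n, hn⟩
        refine mem_iUnion.mpr ⟨n, ?_⟩
        rw [← hTsymm, inv_pow]
        simpa using hn

end GroupAux

section MeasAux
variable {G : Type*} [Group G] [TopologicalSpace G] [IsTopologicalGroup G]
    [LocallyCompactSpace G] [T2Space G] [MeasurableSpace G] [BorelSpace G]
    (K : Subgroup G) [CompactSpace K]
    (lamG : Measure G) [lamG.IsHaarMeasure]
    (lamK : Measure K) [lamK.IsHaarMeasure] [IsProbabilityMeasure lamK]
    [MeasurableSpace (G ⧸ K)] [BorelSpace (G ⧸ K)]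
    (μ : Measure (G ⧸ K))

/-- Real version of the Weyl integration hypothesis. -/
lemma weyl_real
    (hWeyl : ∀ f : G → ℂ, Continuous f → HasCompactSupport f →
      ∀ F : G ⧸ K → ℂ, (∀ g : G, F (QuotientGroup.mk g) = ∫ k : K, f (g * (k : G)) ∂lamK) →
        ∫ g, f g ∂lamG = ∫ x, F x ∂μ)
    (f : G → ℝ) (hf : Continuous f) (hsupp : HasCompactSupport f)
    (F : G ⧸ K → ℝ)
    (hF : ∀ g : G, F (QuotientGroup.mk g) = ∫ k : K, f (g * (k : G)) ∂lamK) :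
    ∫ g, f g ∂lamG = ∫ x, F x ∂μ := by
  have h := hWeyl (fun g => (f g : ℂ)) (Complex.continuous_ofReal.comp hf)
      (hsupp.comp_left (g := fun r : ℝ => (r : ℂ)) Complex.ofReal_zero)
      (fun x => (F x : ℂ)) ?_
  · have e1 : ∫ g, ((f g : ℝ) : ℂ) ∂lamG = ((∫ g, f g ∂lamG : ℝ) : ℂ) := integral_ofReal
    have e2 : ∫ x, ((F x : ℝ) : ℂ) ∂μ = ((∫ x, F x ∂μ : ℝ) : ℂ) := integral_ofReal
    rw [e1, e2] at h
    exact_mod_cast h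
  · intro g
    rw [hF g]
    exact integral_ofReal.symm

/-- `μ` gives positive mass to nonempty open sets. -/
lemma mu_open_pos
    (hWeyl : ∀ f : G → ℂ, Continuous f → HasCompactSupport f →
      ∀ F : G ⧸ K → ℂ, (∀ g : G, F (QuotientGroup.mk g) = ∫ k : K, f (g * (k : G)) ∂lamK) →
        ∫ g, f g ∂lamG = ∫ x, F x ∂μ)
    {O : Set (G ⧸ K)} (hO : IsOpen O) (hne : O.Nonempty) : μ O ≠ 0 := by
  obtain ⟨y, hy⟩ := hne
  obtain ⟨g, rfl⟩ := QuotientGroup.mk_surjective y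
  have hOopen : IsOpen ((QuotientGroup.mk : G → G ⧸ K) ⁻¹' O) :=
    hO.preimage QuotientGroup.continuous_mk
  have hgO : g ∈ (QuotientGroup.mk : G → G ⧸ K) ⁻¹' O := hy
  obtain ⟨f, hf1, hf0, hfc, hficc⟩ := exists_continuous_one_zero_of_isCompact
      (isCompact_singleton (x := g)) (isClosed_compl_iff.mpr hOopen)
      (Set.disjoint_left.mpr (by rintro x rfl; simpa using hgO))
  have hfsupp : Function.support (f : G → ℝ) ⊆ (QuotientGroup.mk : G → G ⧸ K) ⁻¹' O := by
    intro x hx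
    by_contra hxO
    exact hx (hf0 hxO)
  have hfnonneg : (0 : G → ℝ) ≤ f := fun x => (hficc x).1
  set F : G ⧸ K → ℝ := fun y => ∫ k : K, f (Quotient.out y * (k : G)) ∂lamK with hFdef
  haveI : BorelSpace K := Subtype.borelSpace (K : Set G)
  have hF : ∀ g' : G, F (QuotientGroup.mk g') = ∫ k : K, f (g' * (k : G)) ∂lamK := by
    intro g'
    obtain ⟨k₀, hk₀⟩ := QuotientGroup.mk_out_eq_mul K g'
    rw [hFdef]
    simp only
    rw [hk₀]
    have : (fun k : K => f (g' * (k₀ : G) * ((k : K) : G))) =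
        fun k : K => (fun j : K => f (g' * (j : G))) (k₀ * k) := by
      funext k
      simp [mul_assoc]
    rw [this, integral_mul_left_eq_self (fun j : K => f (g' * (j : G))) k₀]
  have heq := weyl_real K lamG lamK μ hWeyl f f.continuous hfc F hF
  have hpos : 0 < ∫ x, f x ∂lamG :=
    f.continuous.integral_pos_of_hasCompactSupport_nonneg_nonzero hfc hfnonneg
      (by rw [hf1 rfl]; norm_num)
  intro hO0
  have hFzero : F =ᵐ[μ] 0 := by
    refine Filter.eventuallyEq_of_mem (s := O ᶜ) ?_ ?_
    · rw [MeasureTheory.mem_ae_iff]; simpa using hO0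
    · intro y hyO
      have : ∀ k : K, f (Quotient.out y * (k : G)) = 0 := by
        intro k
        by_contra hfk
        have hmem := hfsupp hfk
        have : QuotientGroup.mk (Quotient.out y * (k : G)) = y :=
          (QuotientGroup.mk_mul_of_mem _ k.2).trans (QuotientGroup.out_eq' y)
        have hmem2 : QuotientGroup.mk (Quotient.out y * (k : G)) ∈ O := hmem
        rw [this] at hmem2
        exact hyO hmem2
      simp [hFdef, this]
  rw [integral_eq_zero_of_ae hFzero] at heq
  rw [heq] at hpos
  exact lt_irrefl _ hpos

lemma hofmax (r : ℝ) : ENNReal.ofReal (max r 0) = ENNReal.ofReal r := by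
  rcases le_total r 0 with h | h
  · rw [max_eq_right h, ENNReal.ofReal_of_nonpos h, ENNReal.ofReal_zero]
  · rw [max_eq_left h]

lemma HasCompactSupport.max'' {X : Type*} [TopologicalSpace X] {f g : X → ℝ}
    (hf : HasCompactSupport f) (hg : HasCompactSupport g) :
    HasCompactSupport fun x => max (f x) (g x) := by
  refine IsCompact.of_isClosed_subset (hf.union hg) (isClosed_tsupport _) ?_
  have hsub : support (fun x => max (f x) (g x)) ⊆ support f ∪ support g := by
    intro x hx
    by_contra hns
    simp only [mem_union, mem_support, not_or, not_not] at hns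
    apply hx
    simp [hns.1, hns.2]
  calc tsupport (fun x => max (f x) (g x)) ⊆ closure (support f ∪ support g) :=
        closure_mono hsub
    _ = tsupport f ∪ tsupport g := closure_union ..

/-- Core lemma: lower integrals of nonnegative continuous functions on the quotient agree. -/
lemma core_lintegral
    (hWeyl : ∀ f : G → ℂ, Continuous f → HasCompactSupport f →
      ∀ F : G ⧸ K → ℂ, (∀ g : G, F (QuotientGroup.mk g) = ∫ k : K, f (g * (k : G)) ∂lamK) →
        ∫ g, f g ∂lamG = ∫ x, F x ∂μ)
    (Ψ : G ⧸ K → ℝ) (hΨc : Continuous Ψ) (hΨ0 : ∀ y, 0 ≤ Ψ y) :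
    ∫⁻ g, ENNReal.ofReal (Ψ (QuotientGroup.mk g)) ∂lamG = ∫⁻ y, ENNReal.ofReal (Ψ y) ∂μ := by
  haveI : T2Space (G ⧸ K) := quot_t2 K
  by_cases hcov : ∀ n : ℕ, CovCpt {y : G ⧸ K | ((n : ℝ) + 1)⁻¹ < Ψ y}
  · -- Case β : the support is σ-compact-coverable
    have hcov0 : CovCpt {y : G ⧸ K | 0 < Ψ y} := by
      have hset : {y : G ⧸ K | 0 < Ψ y} = ⋃ n : ℕ, {y | ((n : ℝ) + 1)⁻¹ < Ψ y} := by
        ext y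
        simp only [mem_setOf_eq, mem_iUnion]
        constructor
        · intro hy
          obtain ⟨n, hn⟩ := exists_nat_gt (Ψ y)⁻¹
          refine ⟨n, ?_⟩
          rw [inv_lt_comm₀ (by positivity) hy]
          exact hn.trans (by linarith)
        · rintro ⟨n, hn⟩
          exact lt_trans (by positivity) hn
      rw [hset]
      exact CovCpt.iUnion_nat hcov
    obtain ⟨Cs, hCs, hCsub⟩ := hcov0
    -- Urysohn functions
    have hury : ∀ n : ℕ, ∃ χ : G ⧸ K → ℝ, Continuous χ ∧ HasCompactSupport χ ∧
        (∀ y ∈ ⋃ m ∈ Finset.range (n + 1), Cs m, χ y = 1) ∧ ∀ y, χ y ∈ Icc (0 : ℝ) 1 := by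
      intro n
      have hcpt : IsCompact (⋃ m ∈ Finset.range (n + 1), Cs m) :=
        (Finset.range (n + 1)).finite_toSet.isCompact_biUnion fun m _ => hCs m
      obtain ⟨f, hf1, _, hfc, hficc⟩ := exists_continuous_one_zero_of_isCompact hcpt
        isClosed_empty (disjoint_empty _)
      exact ⟨f, f.continuous, hfc, fun y hy => hf1 hy, hficc⟩
    choose χ hχc hχcs hχ1 hχicc using hury
    -- Monotone envelope
    let η : ℕ → G ⧸ K → ℝ := fun n =>
      Nat.rec (χ 0) (fun m ηm => fun y => max (ηm y) (χ (m + 1) y)) n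
    have hη_succ : ∀ n y, η (n + 1) y = max (η n y) (χ (n + 1) y) := fun n y => rfl
    have hηc : ∀ n, Continuous (η n) := by
      intro n
      induction n with
      | zero => exact hχc 0
      | succ m ih => exact ih.max (hχc (m + 1))
    have hηcs : ∀ n, HasCompactSupport (η n) := by
      intro n
      induction n with
      | zero => exact hχcs 0
      | succ m ih => exact ih.max'' (hχcs (m + 1))
    have hηicc : ∀ n y, η n y ∈ Icc (0 : ℝ) 1 := by
      intro n
      induction n with
      | zero => exact hχicc 0
      | succ m ih =>
        intro y
        exact ⟨le_max_of_le_left (ih y).1, max_le (ih y).2 (hχicc (m + 1) y).2⟩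
    have hηmono : ∀ y, Monotone fun n => η n y := by
      intro y
      apply monotone_nat_of_le_succ
      intro n
      rw [hη_succ]
      exact le_max_left _ _
    have hηχ : ∀ n y, χ n y ≤ η n y := by
      intro n y
      cases n with
      | zero => exact le_refl _
      | succ m => rw [hη_succ]; exact le_max_right _ _
    have hηone : ∀ y, 0 < Ψ y → ∃ N : ℕ, ∀ n ≥ N, η n y = 1 := by
      intro y hy
      obtain ⟨m, hm⟩ := mem_iUnion.mp (hCsub hy)
      refine ⟨m, fun n hn => ?_⟩
      have hmem : y ∈ ⋃ j ∈ Finset.range (n + 1), Cs j :=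
        mem_biUnion (Finset.mem_range.mpr (Nat.lt_succ_of_le hn)) hm
      have h1 : (1 : ℝ) ≤ η n y := (hχ1 n y hmem) ▸ hηχ n y
      exact le_antisymm (hηicc n y).2 h1
    -- The approximating sequence
    set gn : ℕ → G ⧸ K → ℝ := fun n y => Ψ y * η n y with hgn
    have hgnc : ∀ n, Continuous (gn n) := fun n => hΨc.mul (hηc n)
    have hgncs : ∀ n, HasCompactSupport (gn n) := fun n =>
      HasCompactSupport.mul_left (f := Ψ) (hηcs n)
    have hgn0 : ∀ n y, 0 ≤ gn n y := fun n y => mul_nonneg (hΨ0 y) (hηicc n y).1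
    have hgnle : ∀ n y, gn n y ≤ Ψ y := fun n y => by
      calc Ψ y * η n y ≤ Ψ y * 1 := mul_le_mul_of_nonneg_left (hηicc n y).2 (hΨ0 y)
        _ = Ψ y := mul_one _
    have hgnmono : ∀ y, Monotone fun n => gn n y := fun y => fun a b hab =>
      mul_le_mul_of_nonneg_left (hηmono y hab) (hΨ0 y)
    -- upstairs versions
    set fn : ℕ → G → ℝ := fun n g => gn n (QuotientGroup.mk g) with hfn
    have hfnc : ∀ n, Continuous (fn n) := fun n => (hgnc n).comp QuotientGroup.continuous_mk
    have hfncs : ∀ n, HasCompactSupport (fn n) := by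
      intro n
      obtain ⟨D, hDc, hDsub⟩ := exists_compact_preimage_subset K (hgncs n)
      refine IsCompact.of_isClosed_subset hDc (isClosed_tsupport _) ?_
      refine subset_trans ?_ hDsub
      have hsub : support (fn n) ⊆ (QuotientGroup.mk : G → G ⧸ K) ⁻¹' tsupport (gn n) :=
        fun x hx => subset_tsupport _ hx
      exact closure_minimal hsub ((isClosed_tsupport _).preimage QuotientGroup.continuous_mk)
    -- per-n integral link via Weyl
    have hlink : ∀ n, ∫ g, fn n g ∂lamG = ∫ y, gn n y ∂μ := by
      intro n
      refine weyl_real K lamG lamK μ hWeyl (fn n) (hfnc n) (hfncs n) (gn n) ?_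
      intro g
      have hconst : ∀ k : K, fn n (g * (k : G)) = gn n (QuotientGroup.mk g) := by
        intro k
        simp only [hfn]
        rw [QuotientGroup.mk_mul_of_mem g k.2]
      rw [show (∫ k : K, fn n (g * (k : G)) ∂lamK) = ∫ _ : K, gn n (QuotientGroup.mk g) ∂lamK
          from integral_congr_ae (Filter.Eventually.of_forall hconst)]
      simp [integral_const]
    -- per-n lintegral link
    have hlin : ∀ n, ∫⁻ g, ENNReal.ofReal (fn n g) ∂lamG = ∫⁻ y, ENNReal.ofReal (gn n y) ∂μ := by
      intro n
      have hup : ∫ g, fn n g ∂lamG = (∫⁻ g, ENNReal.ofReal (fn n g) ∂lamG).toReal :=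
        integral_eq_lintegral_of_nonneg_ae (Filter.Eventually.of_forall fun g => hgn0 n _)
          (hfnc n).aestronglyMeasurable
      have hdn : ∫ y, gn n y ∂μ = (∫⁻ y, ENNReal.ofReal (gn n y) ∂μ).toReal :=
        integral_eq_lintegral_of_nonneg_ae (Filter.Eventually.of_forall fun y => hgn0 n y)
          (hgnc n).aestronglyMeasurable
      have hfinup : ∫⁻ g, ENNReal.ofReal (fn n g) ∂lamG ≠ ∞ := by
        have hint : Integrable (fn n) lamG :=
          (hfnc n).integrable_of_hasCompactSupport (hfncs n)
        have := (hasFiniteIntegral_iff_norm (fn n)).mp hint.2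
        refine ne_of_lt (lt_of_le_of_lt (lintegral_mono fun g => ?_) this)
        exact ENNReal.ofReal_le_ofReal (le_abs_self _)
      by_cases hfind : ∫⁻ y, ENNReal.ofReal (gn n y) ∂μ = ∞
      · exfalso
        have h1 : ∫ y, gn n y ∂μ = 0 := by rw [hdn, hfind, ENNReal.toReal_top]
        have h2 : (∫⁻ g, ENNReal.ofReal (fn n g) ∂lamG).toReal = 0 := by
          rw [← hup, hlink n, h1]
        have h0 : ∫⁻ g, ENNReal.ofReal (fn n g) ∂lamG = 0 := by
          rcases ENNReal.toReal_eq_zero_iff _ |>.mp h2 with h | h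
          · exact h
          · exact absurd h hfinup
        have hae := (lintegral_eq_zero_iff
          (ENNReal.measurable_ofReal.comp (hfnc n).measurable)).mp h0
        have hzero : ∀ g, fn n g = 0 := by
          by_contra hex
          push_neg at hex
          obtain ⟨g₀, hg₀⟩ := hex
          have hg₀pos : 0 < fn n g₀ := lt_of_le_of_ne (hgn0 n _) (Ne.symm hg₀)
          have hopen : IsOpen {x : G | 0 < fn n x} := isOpen_lt continuous_const (hfnc n)
          have hnull : lamG {x : G | 0 < fn n x} = 0 := by
            refine measure_mono_null ?_ (ae_iff.mp hae)
            intro x hx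
            simp only [mem_setOf_eq] at hx
            simp only [mem_setOf_eq, Pi.zero_apply, Function.comp_apply, ENNReal.ofReal_eq_zero]
            exact not_le.mpr hx
          exact IsOpen.measure_ne_zero lamG hopen ⟨g₀, hg₀pos⟩ hnull
        have hgzero : ∀ y, gn n y = 0 := by
          intro y
          obtain ⟨g, rfl⟩ := QuotientGroup.mk_surjective y
          exact hzero g
        rw [show (fun y => ENNReal.ofReal (gn n y)) = fun _ => 0 from
          funext fun y => by rw [hgzero y, ENNReal.ofReal_zero]] at hfind
        simp at hfind
      · have := hup.symm.trans ((hlink n).trans hdn)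
        exact (ENNReal.toReal_eq_toReal_iff' hfinup hfind).mp this
    -- monotone convergence on both sides
    have hsup : ∀ y, (⨆ n, ENNReal.ofReal (gn n y)) = ENNReal.ofReal (Ψ y) := by
      intro y
      apply le_antisymm
      · exact iSup_le fun n => ENNReal.ofReal_le_ofReal (hgnle n y)
      · rcases eq_or_lt_of_le (hΨ0 y) with h | h
        · simp [← h]
        · obtain ⟨N, hN⟩ := hηone y h
          have : gn N y = Ψ y := by
            simp only [hgn]
            rw [hN N (le_refl N), mul_one]
          exact this ▸ le_iSup (fun n => ENNReal.ofReal (gn n y)) N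
    have hmctdn : ∫⁻ y, ENNReal.ofReal (Ψ y) ∂μ = ⨆ n, ∫⁻ y, ENNReal.ofReal (gn n y) ∂μ := by
      rw [← lintegral_iSup (f := fun n y => ENNReal.ofReal (gn n y))
        (fun n => ENNReal.measurable_ofReal.comp (hgnc n).measurable)
        (fun a b hab => fun y => ENNReal.ofReal_le_ofReal (hgnmono y hab))]
      exact lintegral_congr fun y => (hsup y).symm
    have hmctup : ∫⁻ g, ENNReal.ofReal (Ψ (QuotientGroup.mk g)) ∂lamG
        = ⨆ n, ∫⁻ g, ENNReal.ofReal (fn n g) ∂lamG := by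
      rw [← lintegral_iSup (f := fun n g => ENNReal.ofReal (fn n g))
        (fun n => ENNReal.measurable_ofReal.comp (hfnc n).measurable)
        (fun a b hab => fun g => ENNReal.ofReal_le_ofReal (hgnmono _ hab))]
      exact lintegral_congr fun g => (hsup (QuotientGroup.mk g)).symm
    rw [hmctup, hmctdn]
    exact iSup_congr hlin
  · -- Case α : some superlevel set is not coverable; both sides are infinite
    push_neg at hcov
    obtain ⟨n, hnc⟩ := hcov
    obtain ⟨H, hKH, hHopen, hHcov⟩ := exists_open_covcpt_subgroup K
    set c : ℝ := ((n : ℝ) + 1)⁻¹ with hc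
    have hcpos : 0 < c := by positivity
    set O : Set (G ⧸ K) := {y | c < Ψ y} with hO
    have hOopen : IsOpen O := isOpen_lt continuous_const hΨc
    -- upstairs level set
    set O' : Set G := (QuotientGroup.mk : G → G ⧸ K) ⁻¹' O with hO'
    have hO'open : IsOpen O' := hOopen.preimage QuotientGroup.continuous_mk
    have hncup : ¬ CovCpt O' := by
      rintro ⟨u, hu, hsub⟩
      apply hnc
      refine ⟨fun m => QuotientGroup.mk '' u m, fun m => (hu m).image QuotientGroup.continuous_mk, ?_⟩
      intro y hy
      obtain ⟨g, rfl⟩ := QuotientGroup.mk_surjective y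
      rcases mem_iUnion.mp (hsub hy) with ⟨m, hm⟩
      exact mem_iUnion.mpr ⟨m, mem_image_of_mem _ hm⟩
    -- fibers upstairs: cosets of H
    have hfibup : ∀ q : G ⧸ H, IsOpen ((QuotientGroup.mk : G → G ⧸ H) ⁻¹' {q}) ∧
        CovCpt ((QuotientGroup.mk : G → G ⧸ H) ⁻¹' {q}) := by
      intro q
      obtain ⟨g, rfl⟩ := QuotientGroup.mk_surjective q
      have hset : (QuotientGroup.mk : G → G ⧸ H) ⁻¹' {QuotientGroup.mk g}
          = (fun x : G => g⁻¹ * x) ⁻¹' (H : Set G) := by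
        ext x
        simp only [mem_preimage, mem_singleton_iff, SetLike.mem_coe]
        constructor
        · intro hx
          have := QuotientGroup.eq.mp hx
          simpa using (inv_mem this : (x⁻¹ * g)⁻¹ ∈ H)
        · intro hx
          refine QuotientGroup.eq.mpr ?_
          simpa using (inv_mem hx : (g⁻¹ * x)⁻¹ ∈ H)
      constructor
      · rw [hset]
        exact hHopen.preimage (continuous_const.mul continuous_id)
      · rw [hset]
        have himg : (fun x : G => g⁻¹ * x) ⁻¹' (H : Set G) = (fun h : G => g * h) '' (H : Set G) := by
          ext x
          simp only [mem_preimage, mem_image, SetLike.mem_coe]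
          constructor
          · intro hx
            exact ⟨g⁻¹ * x, hx, by group⟩
          · rintro ⟨h, hh, rfl⟩
            simpa using hh
        rw [himg]
        exact hHcov.image (continuous_const.mul continuous_id)
    have hup : lamG O' = ∞ :=
      measure_eq_top_of_not_covCpt lamG
        (fun W hW hne => IsOpen.measure_ne_zero lamG hW hne)
        (QuotientGroup.mk : G → G ⧸ H) (fun q => (hfibup q).1) (fun q => (hfibup q).2)
        hO'open hncup
    -- fibers downstairs
    set r : G ⧸ K → G ⧸ H := fun y => QuotientGroup.mk (Quotient.out y) with hr
    have hrmk : ∀ a : G, r (QuotientGroup.mk a) = QuotientGroup.mk a := by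
      intro a
      obtain ⟨k, hk⟩ := QuotientGroup.mk_out_eq_mul K a
      rw [hr]
      simp only
      rw [hk]
      exact QuotientGroup.mk_mul_of_mem a (hKH k.2)
    have hfibdn : ∀ q : G ⧸ H, IsOpen (r ⁻¹' {q}) ∧ CovCpt (r ⁻¹' {q}) := by
      intro q
      obtain ⟨g, rfl⟩ := QuotientGroup.mk_surjective q
      have hset : r ⁻¹' {(QuotientGroup.mk g : G ⧸ H)}
          = (QuotientGroup.mk : G → G ⧸ K) '' ((fun h : G => g * h) '' (H : Set G)) := by
        ext y
        simp only [mem_preimage, mem_singleton_iff, mem_image]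
        constructor
        · intro hy
          obtain ⟨a, rfl⟩ := QuotientGroup.mk_surjective y
          rw [hrmk a] at hy
          have hmem := QuotientGroup.eq.mp hy
          refine ⟨a, ⟨g⁻¹ * a, ?_, by group⟩, rfl⟩
          simpa using (inv_mem hmem : (a⁻¹ * g)⁻¹ ∈ H)
        · rintro ⟨x, ⟨h, hh, rfl⟩, rfl⟩
          rw [hrmk]
          refine QuotientGroup.eq.mpr ?_
          simpa using (inv_mem hh : h⁻¹ ∈ H)
      constructor
      · rw [hset]
        apply QuotientGroup.isOpenMap_coe
        have : (fun h : G => g * h) '' (H : Set G) = (fun x : G => g⁻¹ * x) ⁻¹' (H : Set G) := by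
          ext x
          simp only [mem_preimage, mem_image, SetLike.mem_coe]
          constructor
          · rintro ⟨h, hh, rfl⟩
            simpa using hh
          · intro hx
            exact ⟨g⁻¹ * x, hx, by group⟩
        rw [this]
        exact hHopen.preimage (continuous_const.mul continuous_id)
      · rw [hset]
        exact ((hHcov.image (continuous_const.mul continuous_id)).image
          QuotientGroup.continuous_mk)
    have hdn : μ O = ∞ :=
      measure_eq_top_of_not_covCpt μ
        (fun W hW hne => mu_open_pos K lamG lamK μ hWeyl hW hne)
        r (fun q => (hfibdn q).1) (fun q => (hfibdn q).2) hOopen hnc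
    -- conclude both lintegrals are infinite
    have hboundup : ∫⁻ g, ENNReal.ofReal (Ψ (QuotientGroup.mk g)) ∂lamG = ∞ := by
      refine top_le_iff.mp ?_
      calc (∞ : ℝ≥0∞) = ENNReal.ofReal c * lamG O' := by
            rw [hup, ENNReal.mul_top (by simpa [ENNReal.ofReal_eq_zero] using hcpos)]
        _ = ∫⁻ g, O'.indicator (fun _ => ENNReal.ofReal c) g ∂lamG := by
            rw [lintegral_indicator_const hO'open.measurableSet]
        _ ≤ _ := by
            refine lintegral_mono fun g => ?_
            by_cases hg : g ∈ O'
            · rw [indicator_of_mem hg]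
              exact ENNReal.ofReal_le_ofReal (le_of_lt hg)
            · rw [indicator_of_notMem hg]
              exact zero_le
    have hbounddn : ∫⁻ y, ENNReal.ofReal (Ψ y) ∂μ = ∞ := by
      refine top_le_iff.mp ?_
      calc (∞ : ℝ≥0∞) = ENNReal.ofReal c * μ O := by
            rw [hdn, ENNReal.mul_top (by simpa [ENNReal.ofReal_eq_zero] using hcpos)]
        _ = ∫⁻ y, O.indicator (fun _ => ENNReal.ofReal c) y ∂μ := by
            rw [lintegral_indicator_const hOopen.measurableSet]
        _ ≤ _ := by
            refine lintegral_mono fun y => ?_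
            by_cases hy : y ∈ O
            · rw [indicator_of_mem hy]
              exact ENNReal.ofReal_le_ofReal (le_of_lt hy)
            · rw [indicator_of_notMem hy]
              exact zero_le
    rw [hboundup, hbounddn]

lemma ofReal_abs' (r : ℝ) : ENNReal.ofReal ‖r‖ = ENNReal.ofReal r + ENNReal.ofReal (-r) := by
  rcases le_total r 0 with h | h
  · rw [Real.norm_eq_abs, abs_of_nonpos h, ENNReal.ofReal_of_nonpos h, zero_add]
  · rw [Real.norm_eq_abs, abs_of_nonneg h, ENNReal.ofReal_of_nonpos (neg_nonpos.mpr h), add_zero]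

/-- Core lemma, Bochner integral version. -/
lemma core_integral
    (hWeyl : ∀ f : G → ℂ, Continuous f → HasCompactSupport f →
      ∀ F : G ⧸ K → ℂ, (∀ g : G, F (QuotientGroup.mk g) = ∫ k : K, f (g * (k : G)) ∂lamK) →
        ∫ g, f g ∂lamG = ∫ x, F x ∂μ)
    (Ψ : G ⧸ K → ℝ) (hΨc : Continuous Ψ) :
    ∫ g, Ψ (QuotientGroup.mk g) ∂lamG = ∫ y, Ψ y ∂μ := by
  have hpos := core_lintegral K lamG lamK μ hWeyl (fun y => max (Ψ y) 0)
    (hΨc.max continuous_const) (fun y => le_max_right _ _)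
  have hneg := core_lintegral K lamG lamK μ hWeyl (fun y => max (-Ψ y) 0)
    (hΨc.neg.max continuous_const) (fun y => le_max_right _ _)
  simp only [hofmax] at hpos hneg
  have hnorm_up : ∫⁻ g, ENNReal.ofReal ‖Ψ (QuotientGroup.mk g)‖ ∂lamG
      = (∫⁻ g, ENNReal.ofReal (Ψ (QuotientGroup.mk g)) ∂lamG)
        + ∫⁻ g, ENNReal.ofReal (-Ψ (QuotientGroup.mk g)) ∂lamG := by
    rw [← lintegral_add_left (f := fun g => ENNReal.ofReal (Ψ (QuotientGroup.mk g)))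
      (ENNReal.measurable_ofReal.comp (hΨc.comp QuotientGroup.continuous_mk).measurable)]
    exact lintegral_congr fun g => ofReal_abs' _
  have hnorm_dn : ∫⁻ y, ENNReal.ofReal ‖Ψ y‖ ∂μ
      = (∫⁻ y, ENNReal.ofReal (Ψ y) ∂μ) + ∫⁻ y, ENNReal.ofReal (-Ψ y) ∂μ := by
    rw [← lintegral_add_left (f := fun y => ENNReal.ofReal (Ψ y))
      (ENNReal.measurable_ofReal.comp hΨc.measurable)]
    exact lintegral_congr fun y => ofReal_abs' _
  have hfin_eq : ∫⁻ g, ENNReal.ofReal ‖Ψ (QuotientGroup.mk g)‖ ∂lamG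
      = ∫⁻ y, ENNReal.ofReal ‖Ψ y‖ ∂μ := by
    rw [hnorm_up, hnorm_dn, hpos, hneg]
  by_cases hint : Integrable Ψ μ
  · have hup : Integrable (fun g => Ψ (QuotientGroup.mk g)) lamG := by
      refine ⟨(hΨc.comp QuotientGroup.continuous_mk).aestronglyMeasurable, ?_⟩
      rw [hasFiniteIntegral_iff_norm, hfin_eq]
      exact (hasFiniteIntegral_iff_norm Ψ).mp hint.2
    rw [integral_eq_lintegral_pos_part_sub_lintegral_neg_part hup,
        integral_eq_lintegral_pos_part_sub_lintegral_neg_part hint, hpos, hneg]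
  · have hup : ¬ Integrable (fun g => Ψ (QuotientGroup.mk g)) lamG := by
      intro hcon
      apply hint
      refine ⟨hΨc.aestronglyMeasurable, ?_⟩
      rw [hasFiniteIntegral_iff_norm, ← hfin_eq]
      exact (hasFiniteIntegral_iff_norm _).mp hcon.2
    rw [integral_undef hup, integral_undef hint]

end MeasAux

section Corr
variable {G : Type*} [Group G] [TopologicalSpace G] [IsTopologicalGroup G] (K : Subgroup G)

/-- The kernel associated to a bi-invariant function. -/
noncomputable def toKer (φ : G → ℝ) : G ⧸ K → G ⧸ K → ℝ :=
  fun x y => φ ((Quotient.out x)⁻¹ * Quotient.out y)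

lemma toKer_mk {φ : G → ℝ} (hbi : IsBiInvariantR K φ) (a b : G) :
    toKer K φ (QuotientGroup.mk a) (QuotientGroup.mk b) = φ (a⁻¹ * b) := by
  obtain ⟨k1, hk1⟩ := QuotientGroup.mk_out_eq_mul K a
  obtain ⟨k2, hk2⟩ := QuotientGroup.mk_out_eq_mul K b
  rw [toKer, hk1, hk2]
  have heq : (a * (k1 : G))⁻¹ * (b * (k2 : G)) = ((k1⁻¹ : K) : G) * (a⁻¹ * b) * (k2 : G) := by
    push_cast
    group
  rw [heq]
  exact hbi k1⁻¹ k2 (a⁻¹ * b)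

end Corr



section Corr2
variable {G : Type*} [Group G] [TopologicalSpace G] [IsTopologicalGroup G] {K : Subgroup G}

lemma ker_apply_eq {Φ : G ⧸ K → G ⧸ K → ℝ} (hG : IsGInvariantKernel K Φ) (a b : G) :
    Φ (QuotientGroup.mk a) (QuotientGroup.mk b)
      = Φ (QuotientGroup.mk (1 : G)) (QuotientGroup.mk (a⁻¹ * b)) := by
  have := hG a 1 (a⁻¹ * b)
  simpa [mul_one, mul_inv_cancel_left] using this

/-- Direction A: a kernel in `FdelKer` gives a function in `FdelFun`. -/
lemma ker_to_fun_mem {U V : Set G} {Φ : G ⧸ K → G ⧸ K → ℝ} (hΦ : Φ ∈ FdelKer G K U V) :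
    (fun g : G => Φ (QuotientGroup.mk (1 : G)) (QuotientGroup.mk g)) ∈ FdelFun G K U V := by
  obtain ⟨hc, hpd, hG, hdiag, hsuppP, hsuppM⟩ := hΦ
  have key : ∀ a b : G, Φ (QuotientGroup.mk (1 : G)) (QuotientGroup.mk (a⁻¹ * b))
      = Φ (QuotientGroup.mk a) (QuotientGroup.mk b) := fun a b => (ker_apply_eq hG a b).symm
  refine ⟨?_, ?_, ?_, ?_, hsuppP, hsuppM⟩
  · exact hc.comp (Continuous.prodMk continuous_const QuotientGroup.continuous_mk)
  · intro n c g
    have h := hpd n c g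
    refine le_of_le_of_eq h (Finset.sum_congr rfl fun i _ => Finset.sum_congr rfl fun j _ => ?_)
    simp only [key]
  · intro k k' g
    have h1 : QuotientGroup.mk ((k : G) * g * (k' : G)) = QuotientGroup.mk ((k : G) * g) :=
      QuotientGroup.mk_mul_of_mem _ k'.2
    have h2 : QuotientGroup.mk ((k : G) : G) = (QuotientGroup.mk (1 : G) : G ⧸ K) := by
      have := QuotientGroup.mk_mul_of_mem (1 : G) k.2
      simpa using this
    have h3 := hG (k : G)⁻¹ (k : G) ((k : G) * g)
    simp only [inv_mul_cancel, inv_mul_cancel_left] at h3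
    simp only [h1]
    rw [h3, h2]
  · simpa using hdiag 1

/-- Direction B: a function in `FdelFun` gives a kernel in `FdelKer`. -/
lemma fun_to_ker_mem {U V : Set G} {φ : G → ℝ} (hφ : φ ∈ FdelFun G K U V) :
    toKer K φ ∈ FdelKer G K U V := by
  obtain ⟨hc, hpd, hbi, hone, hsuppP, hsuppM⟩ := hφ
  have hmk := toKer_mk K (φ := φ) hbi
  have hone' : ∀ x : G, toKer K φ (QuotientGroup.mk (1 : G)) (QuotientGroup.mk x) = φ x := by
    intro x
    rw [hmk 1 x, inv_one, one_mul]
  refine ⟨?_, ?_, ?_, ?_, ?_, ?_⟩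
  · have hqm : Topology.IsQuotientMap
        (Prod.map (QuotientGroup.mk : G → G ⧸ K) (QuotientGroup.mk : G → G ⧸ K)) :=
      (QuotientGroup.isOpenMap_coe.prodMap QuotientGroup.isOpenMap_coe).isQuotientMap
        (QuotientGroup.continuous_mk.prodMap QuotientGroup.continuous_mk)
        (QuotientGroup.mk_surjective.prodMap QuotientGroup.mk_surjective)
    rw [hqm.continuous_iff]
    have : ((fun p : (G ⧸ K) × (G ⧸ K) => toKer K φ p.1 p.2) ∘
        Prod.map QuotientGroup.mk QuotientGroup.mk) = fun p : G × G => φ (p.1⁻¹ * p.2) := by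
      funext p
      exact hmk p.1 p.2
    rw [this]
    exact hc.comp (continuous_fst.inv.mul continuous_snd)
  · intro n a x
    have h := hpd n a x
    refine le_of_le_of_eq h (Finset.sum_congr rfl fun i _ => Finset.sum_congr rfl fun j _ => ?_)
    simp only [hmk]
  · intro g x y
    rw [hmk, hmk]
    congr 1
    group
  · intro x
    rw [hmk]
    simpa using hone
  · have : (fun x : G => max (toKer K φ (QuotientGroup.mk (1 : G)) (QuotientGroup.mk x)) 0)
        = fun g => max (φ g) 0 := by
      funext x
      rw [hone' x]
    rw [this]
    exact hsuppP
  · have : (fun x : G => max (-(toKer K φ (QuotientGroup.mk (1 : G)) (QuotientGroup.mk x))) 0)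
        = fun g => max (-(φ g)) 0 := by
      funext x
      rw [hone' x]
    rw [this]
    exact hsuppM

end Corr2


end DelsarteAux

open Set Function in
theorem stmt8 {G : Type*} [Group G] [TopologicalSpace G] [IsTopologicalGroup G]
    [LocallyCompactSpace G] [T2Space G] [MeasurableSpace G] [BorelSpace G]
    (K : Subgroup G) [CompactSpace K]
    (lamG : Measure G) [lamG.IsHaarMeasure]
    (lamK : Measure K) [lamK.IsHaarMeasure] [IsProbabilityMeasure lamK]
    [MeasurableSpace (G ⧸ K)] [BorelSpace (G ⧸ K)]
    (μ : Measure (G ⧸ K))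
    -- `μ` satisfies the Weyl integration formula
    (hWeyl : ∀ f : G → ℂ, Continuous f → HasCompactSupport f →
      ∀ F : G ⧸ K → ℂ, (∀ g : G, F (QuotientGroup.mk g) = ∫ k : K, f (g * (k : G)) ∂lamK) →
        ∫ g, f g ∂lamG = ∫ x, F x ∂μ)
    (U V : Set G)
    (hU : U ∈ nhds (1 : G)) (hUbi : (K : Set G) * U * (K : Set G) = U) (hUsym : U⁻¹ = U)
    (hVbi : (K : Set G) * V * (K : Set G) = V) (hVsym : V⁻¹ = V) :
    sSup ((fun Φ : G ⧸ K → G ⧸ K → ℝ =>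
        ∫ y, Φ (QuotientGroup.mk (1 : G)) y ∂μ) '' FdelKer G K U V) =
      sSup ((fun φ : G → ℝ => ∫ g, φ g ∂lamG) '' FdelFun G K U V) := by
  congr 1
  apply Set.Subset.antisymm
  · rintro v ⟨Φ, hΦ, rfl⟩
    refine ⟨fun g => Φ (QuotientGroup.mk (1 : G)) (QuotientGroup.mk g), ker_to_fun_mem hΦ, ?_⟩
    exact core_integral K lamG lamK μ hWeyl (fun y => Φ (QuotientGroup.mk (1 : G)) y)
      (hΦ.1.comp (Continuous.prodMk continuous_const continuous_id))
  · rintro v ⟨φ, hφ, rfl⟩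
    refine ⟨toKer K φ, fun_to_ker_mem hφ, ?_⟩
    have hΨc : Continuous fun y => toKer K φ (QuotientGroup.mk (1 : G)) y :=
      (fun_to_ker_mem hφ).1.comp (Continuous.prodMk continuous_const continuous_id)
    have h := core_integral K lamG lamK μ hWeyl _ hΨc
    refine Eq.trans h.symm ?_
    refine integral_congr_ae (Filter.Eventually.of_forall fun g => ?_)
    simp only
    rw [toKer_mk K hφ.2.2.1, inv_one, one_mul]
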